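/- arXiv:1705.10894 — 3 statements merged into one kernel-verified Lean document; each statement's English description precedes it below -/
import Mathlib

section
/- For all integers n ≥ 1 and k ≥ 1, the identity ∑_{α+β=k} C(n,α)·C(n-1+β, n-1) = ∑_{ℓ} C(n,ℓ)·C(k-1, ℓ-1)·2^ℓ holds. -/
open PowerSeries Finset

noncomputable def Jaux (d : ℕ) : (PowerSeries ℤ)ˣ := PowerSeries.invOneSubPow ℤ d

lemma lemA {l n : ℕ} (h : l ≤ n) :
    ((1 - X : ℤ⟦X⟧) ^ (n - l)) * (Jaux n).val = (Jaux l).val := by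
  set w : (ℤ⟦X⟧)ˣ := Units.mkOfMulEqOne (1 - X) (mk 1 : ℤ⟦X⟧) <|
        Eq.trans (mul_comm _ _) (mk_one_mul_one_sub_eq_one ℤ) with hw
  have hwval : (w : ℤ⟦X⟧) = 1 - X := rfl
  have hJ : ∀ d, Jaux d = w⁻¹ ^ d := fun d => invOneSubPow_eq_inv_one_sub_pow ℤ d
  have hmul : w ^ l * w ^ (n - l) = w ^ n := by
    rw [← pow_add, Nat.add_sub_cancel' h]
  have key : w ^ (n - l) * Jaux n = Jaux l := by
    rw [hJ, hJ, inv_pow, inv_pow, ← hmul, mul_inv, mul_comm ((w ^ l)⁻¹) _,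
      ← mul_assoc, mul_inv_cancel, one_mul]
  calc ((1 - X : ℤ⟦X⟧) ^ (n - l)) * (Jaux n).val
      = ((w ^ (n - l) * Jaux n : (ℤ⟦X⟧)ˣ) : ℤ⟦X⟧) := by
        rw [Units.val_mul, Units.val_pow_eq_pow_val, hwval]
    _ = (Jaux l).val := by rw [key]

lemma lemE (n : ℕ) :
    (1 + X : ℤ⟦X⟧) ^ n * (Jaux n).val =
      ∑ l ∈ range (n + 1), (n.choose l : ℤ⟦X⟧) * (2 * X) ^ l * (Jaux l).val := by
  have hadd : (1 + X : ℤ⟦X⟧) = 2 * X + (1 - X) := by ring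
  rw [hadd, add_pow, Finset.sum_mul]
  refine Finset.sum_congr rfl fun l hl => ?_
  have hln : l ≤ n := Nat.lt_succ_iff.mp (mem_range.mp hl)
  rw [mul_assoc ((2*X)^l), mul_comm ((1 - X : ℤ⟦X⟧) ^ (n - l)), mul_assoc, mul_assoc,
    lemA hln]
  ring

lemma coeff_one_add_X_pow_PS (n j : ℕ) :
    (PowerSeries.coeff j) ((1 + X : ℤ⟦X⟧) ^ n) = (n.choose j : ℤ) := by
  have : ((1 + Polynomial.X : Polynomial ℤ) : ℤ⟦X⟧) = 1 + X := by
    simp [Polynomial.coe_add, Polynomial.coe_one]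
  rw [← this, ← Polynomial.coe_pow, Polynomial.coeff_coe, Polynomial.coeff_one_add_X_pow]

/-- The two dimension counts agree:
∑_{α+β=k} C(n,α)·C(n-1+β,n-1) = ∑_ℓ C(n,ℓ)·C(k-1,ℓ-1)·2^ℓ. -/
theorem stmt_2 (n k : ℕ) (hn : 1 ≤ n) (hk : 1 ≤ k) :
    ∑ α ∈ Finset.range (k + 1), n.choose α * (n - 1 + (k - α)).choose (n - 1) =
      ∑ ℓ ∈ Finset.range (n + 1),
        if ℓ = 0 then 0 else n.choose ℓ * (k - 1).choose (ℓ - 1) * 2 ^ ℓ := by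
  have hJn : (Jaux n).val = mk fun m => ((n - 1 + m).choose (n - 1) : ℤ) :=
    invOneSubPow_val_eq_mk_sub_one_add_choose_of_pos ℤ n hn
  have h1 : (∑ α ∈ Finset.range (k + 1),
      (n.choose α * (n - 1 + (k - α)).choose (n - 1) : ℤ)) =
      PowerSeries.coeff k ((1 + X : ℤ⟦X⟧) ^ n * (Jaux n).val) := by
    rw [PowerSeries.coeff_mul, Finset.Nat.sum_antidiagonal_eq_sum_range_succ_mk]
    refine Finset.sum_congr rfl fun a _ => ?_
    rw [coeff_one_add_X_pow_PS, hJn, coeff_mk]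
  have h2 : PowerSeries.coeff k
      (∑ l ∈ range (n + 1), (n.choose l : ℤ⟦X⟧) * (2 * X) ^ l * (Jaux l).val) =
      ∑ l ∈ Finset.range (n + 1),
        (if l = 0 then 0 else (n.choose l * (k - 1).choose (l - 1) * 2 ^ l : ℤ)) := by
    rw [map_sum]
    refine Finset.sum_congr rfl fun l _ => ?_
    have hterm : (n.choose l : ℤ⟦X⟧) * (2 * X) ^ l * (Jaux l).val =
        PowerSeries.C ((n.choose l : ℤ) * 2 ^ l) * (X ^ l * (Jaux l).val) := by
      rw [mul_pow, map_mul, map_pow]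
      simp only [map_natCast, map_ofNat]
      ring
    rw [hterm, PowerSeries.coeff_C_mul, PowerSeries.coeff_X_pow_mul']
    by_cases hlk : l ≤ k
    · rw [if_pos hlk]
      rcases Nat.eq_zero_or_pos l with hl0 | hl0
      · subst hl0
        have hJ0 : (Jaux 0).val = 1 := by
          simp [Jaux, invOneSubPow_zero]
        rw [Nat.sub_zero, hJ0, PowerSeries.coeff_one, if_neg (by omega), if_pos rfl]
        ring
      · rw [if_neg (by omega)]
        have hJl : (Jaux l).val = mk fun m => ((l - 1 + m).choose (l - 1) : ℤ) :=
          invOneSubPow_val_eq_mk_sub_one_add_choose_of_pos ℤ l hl0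
        rw [hJl, coeff_mk]
        have : l - 1 + (k - l) = k - 1 := by omega
        rw [this]
        ring
    · rw [if_neg hlk, if_neg (by omega)]
      have : (k - 1).choose (l - 1) = 0 := Nat.choose_eq_zero_of_lt (by omega)
      rw [this]
      push_cast
      ring
  have := h1.trans ((congrArg (PowerSeries.coeff k) (lemE n)).trans h2)
  exact_mod_cast this
end

section
/- With c(w,2n) as in the standard recursion (c(0,2n)=1, c(w,2)=4 for w>0, c(w,2n)=4+4·∑_{i=1}^{w-1}c(i,2n-2)+c(w,2n-2)): for every n ≥ 1 and every w > n, ∑_{k=0}^{n} (−1)^k·C(n,k)·c(w−k, 2n+2) = 2^{2n+2}. -/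
/-- `c w n` stands for c(w, 2n), the first Betti number of the weight-w
Hamiltonian chain complex on the 2n-torus: c(0,2n)=1, c(w,2)=4 for w>0, and
c(w,2n) = 4 + 4·∑_{i=1}^{w-1} c(i,2n-2) + c(w,2n-2) for n ≥ 2, w > 0. -/
def c : ℕ → ℕ → ℕ
  | 0, _ => 1
  | _ + 1, 0 => 0
  | _ + 1, 1 => 4
  | w + 1, n + 2 =>
      4 + 4 * (∑ i ∈ Finset.Icc 1 w, c i (n + 1)) + c (w + 1) (n + 1)
termination_by _ n => n

/-- The basic difference identity from the recursion: for w ≥ 2 and second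
argument ≥ 2, c(w,·) − c(w−1,·) = 3·c(w−1,·−1) + c(w,·−1). -/
lemma cdiff (n v : ℕ) :
    c (v + 2) (n + 2) = c (v + 1) (n + 2) + 3 * c (v + 1) (n + 1) + c (v + 2) (n + 1) := by
  rw [c, c, Finset.sum_Icc_succ_top (by omega : 1 ≤ v + 1)]
  ring

/-- Pascal's rule for alternating (finite-difference) sums. -/
lemma pascal_sum (n w : ℕ) (f : ℕ → ℤ) :
    ∑ k ∈ Finset.range (n + 2), (-1 : ℤ) ^ k * ((n + 1).choose k) * f (w - k)
      = ∑ k ∈ Finset.range (n + 1), (-1 : ℤ) ^ k * (n.choose k) * f (w - k)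
        - ∑ k ∈ Finset.range (n + 1), (-1 : ℤ) ^ k * (n.choose k) * f (w - 1 - k) := by
  conv_lhs => rw [Finset.sum_range_succ' _ (n + 1)]
  conv_rhs => rw [Finset.sum_range_succ' _ n]
  have e : ∀ k, (-1 : ℤ) ^ (k + 1) * ((n + 1).choose (k + 1)) * f (w - (k + 1))
      = (-1 : ℤ) ^ (k + 1) * (n.choose (k + 1)) * f (w - (k + 1))
        - (-1 : ℤ) ^ k * (n.choose k) * f (w - 1 - k) := by
    intro k
    have hw : w - 1 - k = w - (k + 1) := by omega
    rw [Nat.choose_succ_succ, hw]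
    push_cast
    ring
  rw [Finset.sum_congr rfl (fun k _ => e k), Finset.sum_sub_distrib]
  have h2 : ∑ k ∈ Finset.range (n + 1), (-1 : ℤ) ^ (k + 1) * (n.choose (k + 1)) * f (w - (k + 1))
      = ∑ k ∈ Finset.range n, (-1 : ℤ) ^ (k + 1) * (n.choose (k + 1)) * f (w - (k + 1)) := by
    rw [Finset.sum_range_succ]
    simp [Nat.choose_succ_self]
  rw [h2]
  simp only [Nat.choose_zero_right, Nat.cast_one]
  push_cast
  ring


/-- For every n ≥ 1 and every w > n,
∑_{k=0}^{n} (−1)^k·C(n,k)·c(w−k, 2n+2) = 2^{2n+2}. -/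
theorem stmt_8 (n w : ℕ) (hn : 1 ≤ n) (hw : n < w) :
    ∑ k ∈ Finset.range (n + 1),
        (-1 : ℤ) ^ k * n.choose k * c (w - k) (n + 1) = 2 ^ (2 * n + 2) := by
  induction n generalizing w with
  | zero => omega
  | succ m ih =>
    rcases Nat.eq_zero_or_pos m with hm | hm
    · -- base case n = 1
      subst hm
      obtain ⟨v, rfl⟩ : ∃ v, w = v + 2 := ⟨w - 2, by omega⟩
      rw [Finset.sum_range_succ, Finset.sum_range_succ, Finset.sum_range_zero]
      have e := cdiff 0 v
      have h1 : c (v + 1) 1 = 4 := by rw [c]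
      have h2 : c (v + 2) 1 = 4 := by rw [c]
      norm_num at e ⊢
      rw [h1, h2] at e
      omega
    · -- inductive step
      have key := pascal_sum m w (fun x => (c x (m + 2) : ℤ))
      rw [key]
      have step : ∀ k ∈ Finset.range (m + 1),
          (-1 : ℤ) ^ k * (m.choose k) * (c (w - k) (m + 2) : ℤ)
            - (-1 : ℤ) ^ k * (m.choose k) * (c (w - 1 - k) (m + 2) : ℤ)
          = 3 * ((-1 : ℤ) ^ k * (m.choose k) * (c (w - 1 - k) (m + 1) : ℤ))
            + (-1 : ℤ) ^ k * (m.choose k) * (c (w - k) (m + 1) : ℤ) := by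
        intro k hk
        simp only [Finset.mem_range] at hk
        obtain ⟨v, hv⟩ : ∃ v, w - k = v + 2 := ⟨w - k - 2, by omega⟩
        have hv1 : w - 1 - k = v + 1 := by omega
        rw [hv, hv1, cdiff m v]
        push_cast
        ring
      rw [← Finset.sum_sub_distrib, Finset.sum_congr rfl step, Finset.sum_add_distrib,
        ← Finset.mul_sum, ih (w - 1) hm (by omega), ih w hm (by omega)]
      ring
end

section
/- On the 2-torus with basis functions z[c] for c = (c_1,c_2) ∈ ℤ², where z[c] = s(c_1,x_1)·s(c_2,x_2) with s(a,x) = sin(ax) if a>0 and cos(ax) if a≤0, and with the reduced (top-weight) Poisson bracket, the following holds: for a, b nonzero integers, {z[(−a,0)], z[(0,−b)]} = a·b·z[(a,b)]; consequently every basis element z[(a,b)] with a·b ≠ 0 lies in the image of the bracket. -/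
/-- s(a,x) = sin(ax) if a > 0, cos(ax) if a ≤ 0. -/
noncomputable def s (a : ℤ) (x : ℝ) : ℝ :=
  if 0 < a then Real.sin (a * x) else Real.cos (a * x)

/-- The trigonometric basis function z[(c₁,c₂)] on the 2-torus. -/
noncomputable def z (c₁ c₂ : ℤ) (x y : ℝ) : ℝ := s c₁ x * s c₂ y

/-- The Poisson bracket of two functions on the 2-torus:
{F,G} = ∂₁F·∂₂G − ∂₂F·∂₁G. -/
noncomputable def PB (F G : ℝ → ℝ → ℝ) (x y : ℝ) : ℝ :=
  deriv (fun t => F t y) x * deriv (fun t => G x t) y -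
    deriv (fun t => F x t) y * deriv (fun t => G t y) x

lemma hasDerivAt_sin_mul (c x : ℝ) :
    HasDerivAt (fun t => Real.sin (c * t)) (c * Real.cos (c * x)) x := by
  simpa [mul_comm, Function.comp_def] using
    (Real.hasDerivAt_sin (c * x)).comp x ((hasDerivAt_id x).const_mul c)

lemma hasDerivAt_cos_mul (c x : ℝ) :
    HasDerivAt (fun t => Real.cos (c * t)) (-(c * Real.sin (c * x))) x := by
  simpa [mul_comm, Function.comp_def] using
    (Real.hasDerivAt_cos (c * x)).comp x ((hasDerivAt_id x).const_mul c)

lemma hasDerivAt_s_neg (a : ℤ) (ha : a ≠ 0) (x : ℝ) :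
    HasDerivAt (fun t => s (-a) t) (-(a : ℝ) * s a x) x := by
  rcases lt_or_gt_of_ne ha with h | h
  · have h1 : ¬ (0 < a) := by omega
    have h2 : (0 : ℤ) < -a := by omega
    have := hasDerivAt_sin_mul (-(a : ℝ)) x
    simp only [s, if_pos h2, if_neg h1, Int.cast_neg]
    simpa using this.congr_deriv (by ring_nf; rw [Real.cos_neg])
  · have h1 : 0 < a := h
    have h2 : ¬ ((0 : ℤ) < -a) := by omega
    have := hasDerivAt_cos_mul (-(a : ℝ)) x
    simp only [s, if_pos h1, if_neg h2, Int.cast_neg]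
    simpa using this.congr_deriv (by ring_nf; rw [Real.sin_neg]; ring)

lemma s_zero (x : ℝ) : s 0 x = 1 := by simp [s]

lemma PB_main (a b : ℤ) (ha : a ≠ 0) (hb : b ≠ 0) (x y : ℝ) :
    PB (z (-a) 0) (z 0 (-b)) x y = (a : ℝ) * b * z a b x y := by
  have hF1 : deriv (fun t => z (-a) 0 t y) x = -(a : ℝ) * s a x := by
    have : (fun t => z (-a) 0 t y) = fun t => s (-a) t := by
      funext t; simp [z, s_zero]
    rw [this]; exact (hasDerivAt_s_neg a ha x).deriv
  have hF2 : deriv (fun t => z (-a) 0 x t) y = 0 := by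
    have : (fun t => z (-a) 0 x t) = fun _ => s (-a) x := by
      funext t; simp [z, s_zero]
    rw [this, deriv_const]
  have hG1 : deriv (fun t => z 0 (-b) x t) y = -(b : ℝ) * s b y := by
    have : (fun t => z 0 (-b) x t) = fun t => s (-b) t := by
      funext t; simp [z, s_zero]
    rw [this]; exact (hasDerivAt_s_neg b hb y).deriv
  have hG2 : deriv (fun t => z 0 (-b) t y) x = 0 := by
    have : (fun t => z 0 (-b) t y) = fun _ => s (-b) y := by
      funext t; simp [z, s_zero]
    rw [this, deriv_const]
  unfold PB
  rw [hF1, hF2, hG1, hG2]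
  simp only [z]
  ring

/-- For nonzero integers a, b: {z[(−a,0)], z[(0,−b)]} = a·b·z[(a,b)]
(here the bracket already is top-weight, so it agrees with the reduced
bracket); consequently z[(a,b)] with a·b ≠ 0 lies in the image of the
bracket. -/
theorem stmt_15 (a b : ℤ) (ha : a ≠ 0) (hb : b ≠ 0) :
    (∀ x y : ℝ, PB (z (-a) 0) (z 0 (-b)) x y = (a : ℝ) * b * z a b x y) ∧
    ∃ F G : ℝ → ℝ → ℝ, ∀ x y : ℝ, PB F G x y = z a b x y := by
  constructor
  · exact fun x y => PB_main a b ha hb x y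
  · refine ⟨z (-a) 0, fun u v => ((a : ℝ) * b)⁻¹ * z 0 (-b) u v, fun x y => ?_⟩
    have hab : ((a : ℝ) * b) ≠ 0 := by
      simp [ha, hb]
    have key := PB_main a b ha hb x y
    have hF2 : deriv (fun t => z (-a) 0 x t) y = 0 := by
      have : (fun t => z (-a) 0 x t) = fun _ => s (-a) x := by
        funext t; simp [z, s_zero]
      rw [this, deriv_const]
    have hF1 : deriv (fun t => z (-a) 0 t y) x = -(a : ℝ) * s a x := by
      have : (fun t => z (-a) 0 t y) = fun t => s (-a) t := by
        funext t; simp [z, s_zero]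
      rw [this]; exact (hasDerivAt_s_neg a ha x).deriv
    have hG1 : deriv (fun t => ((a : ℝ) * b)⁻¹ * z 0 (-b) x t) y
        = ((a : ℝ) * b)⁻¹ * (-(b : ℝ) * s b y) := by
      have h : (fun t => ((a : ℝ) * b)⁻¹ * z 0 (-b) x t)
          = fun t => ((a : ℝ) * b)⁻¹ * s (-b) t := by
        funext t; simp [z, s_zero]
      rw [h]
      exact ((hasDerivAt_s_neg b hb y).const_mul _).deriv
    have hG2 : deriv (fun t => ((a:ℝ)*b)⁻¹ * z 0 (-b) t y) x = 0 := by
      have : (fun t => ((a:ℝ)*b)⁻¹ * z 0 (-b) t y)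
          = fun _ => ((a:ℝ)*b)⁻¹ * s (-b) y := by
        funext t; simp [z, s_zero]
      rw [this, deriv_const]
    unfold PB
    rw [hF1, hF2, hG1, hG2]
    simp only [z]
    field_simp
    ring
end
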